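/- Under the same hypotheses with F ≠ −1: 2G(p,q) − 2Δ(p)Δ(q) = (2(F+1)/(1−y²z²)²)·(1 − 2E₂y² + y⁴)(1 − 2E₃z² + z⁴), where E₂ = (C+E−D)/(F+1) and E₃ = (C+E+D)/(F+1). -/

import Mathlib

theorem stmt12 (C D E F y z p q Δp Δq : ℂ)
    (hconstraint : C^2 - D^2 + E^2 + F^2 - 2*C*E*F = 1)
    (hF : F ≠ -1) (h : 1 - y^2*z^2 ≠ 0)
    (hpq : p * q = (y^2 - z^2) / (1 - y^2*z^2))
    (hsum : p^2 + q^2 = 2 * ((1 + y^2*z^2) * (y^2 + z^2) - 4*E*y^2*z^2) / (1 - y^2*z^2)^2)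
    (hΔ : Δp * Δq = -((1 + y^2*z^2)^2 - 2*E*(1 + y^2*z^2)*(y^2 + z^2) + (y^2 + z^2)^2)
      / (1 - y^2*z^2)^2) :
    2 * (F*(1 + p^2*q^2) - C*(p^2 + q^2) + 2*D*p*q) - 2 * Δp * Δq =
      (2*(F + 1) / (1 - y^2*z^2)^2) *
        ((1 - 2*((C + E - D)/(F + 1))*y^2 + y^4) * (1 - 2*((C + E + D)/(F + 1))*z^2 + z^4)) := by
  have hF1 : F + 1 ≠ 0 := fun h' => hF (by linear_combination h')
  have hprod : (F+1) * ((1 - 2*((C + E - D)/(F + 1))*y^2 + y^4) * (1 - 2*((C + E + D)/(F + 1))*z^2 + z^4)) =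
      (F+1)*(1+y^4)*(1+z^4) - 2*(C+E-D)*y^2*(1+z^4) - 2*(C+E+D)*z^2*(1+y^4)
        + 4*(1-F+2*C*E)*y^2*z^2 := by
    field_simp
    linear_combination 4*y^2*z^2*hconstraint
  have hpq2 : p^2*q^2 = (p*q)^2 := by ring
  rw [show (2:ℂ)*D*p*q = 2*D*(p*q) by ring, hpq2, hpq, hsum, show 2 * Δp * Δq = 2*(Δp * Δq) by ring, hΔ,
    show (2*(F + 1) / (1 - y^2*z^2)^2) *
        ((1 - 2*((C + E - D)/(F + 1))*y^2 + y^4) * (1 - 2*((C + E + D)/(F + 1))*z^2 + z^4)) =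
      (2 / (1 - y^2*z^2)^2) * ((F+1) * ((1 - 2*((C + E - D)/(F + 1))*y^2 + y^4) * (1 - 2*((C + E + D)/(F + 1))*z^2 + z^4))) by ring,
    hprod]
  field_simp
  ring
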